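/- If a homomorphism g : D →* G has the right lifting property with respect to every homomorphism f : N →* H whose image has normal closure all of H, then g is injective. -/

import Mathlib

/-- Quillen lifting property: `f ⧄ g`. -/
def Lifts {A B X Y : Type*} [Group A] [Group B] [Group X] [Group Y]
    (f : A →* B) (g : X →* Y) : Prop :=
  ∀ (i : A →* X) (j : B →* Y), g.comp i = j.comp f →
    ∃ h : B →* X, h.comp f = i ∧ g.comp h = j
theorem stmt18 {D G : Type u} [Group D] [Group G] (g : D →* G)
    (h : ∀ (N H : Type u) [Group N] [Group H] (f : N →* H),
      Subgroup.normalClosure (f.range : Set H) = ⊤ → Lifts f g) :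
    Function.Injective g := by
  rw [injective_iff_map_eq_one]
  intro d hd
  set f := QuotientGroup.mk' (⊤ : Subgroup (ULift (Multiplicative ℤ)))
  have hnc : Subgroup.normalClosure (f.range : Set (ULift (Multiplicative ℤ) ⧸ (⊤ : Subgroup (ULift (Multiplicative ℤ))))) = ⊤ := by
    refine top_le_iff.1 ?_
    intro x _
    apply Subgroup.subset_normalClosure
    exact QuotientGroup.mk'_surjective _ x
  have hl := h _ _ f hnc
  set i : ULift (Multiplicative ℤ) →* D :=
    (zpowersHom D d).comp MulEquiv.ulift.toMonoidHom with hi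
  have hcomm : g.comp i = (1 : _ →* G).comp f := by
    ext x
    simp [hi, hd]
  obtain ⟨l, hl1, hl2⟩ := hl i 1 hcomm
  have := DFunLike.congr_fun hl1 (ULift.up (Multiplicative.ofAdd 1))
  simp only [MonoidHom.comp_apply] at this
  have hf : f (ULift.up (Multiplicative.ofAdd 1)) = 1 :=
    (QuotientGroup.eq_one_iff _).2 (by trivial)
  rw [hf, map_one] at this
  change (1:D) = d ^ (1:ℤ) at this
  simpa using this.symm
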